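/- Let n ∈ ℤ with n ≠ −1, let k, m, μ ∈ ℂ with k ≠ 1, and define φ : ℂ² → ℂ² by φ(x,y) = (exp(x/(n+1)), exp(y − m·x/((n+1)(k−1)))). Then φ is holomorphic, its values have both coordinates nonzero, and for every (x,y) ∈ ℂ² and every tangent vector (u,v) ∈ ℂ², writing (X,Y) = φ(x,y) and (U,V) for the image of (u,v) under the (complex Fréchet) derivative of φ at (x,y), one has V/Y + (m/((k−1)·X))·U + μ·Xⁿ·U = v + (μ·e^x/(n+1))·u, where Xⁿ is the integer power of the nonzero complex number X. In other words, φ pulls back the 1-form dy/y + (m/((k−1)x))dx + μ·xⁿdx on ℂ*×ℂ* to the 1-form dy + (μ·e^x/(n+1))dx on ℂ². -/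

import Mathlib

open Complex ContinuousLinearMap

theorem stmt10 (n : ℤ) (hn : n ≠ -1) (k m μ : ℂ) (hk : k ≠ 1)
    (φ : ℂ × ℂ → ℂ × ℂ)
    (hφ : φ = fun p => (Complex.exp (p.1 / ((n : ℂ) + 1)),
      Complex.exp (p.2 - m * p.1 / (((n : ℂ) + 1) * (k - 1))))) :
    Differentiable ℂ φ ∧
    (∀ p : ℂ × ℂ, (φ p).1 ≠ 0 ∧ (φ p).2 ≠ 0) ∧
    ∀ x y u v : ℂ,
      (fderiv ℂ φ (x, y) (u, v)).2 / (φ (x, y)).2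
        + (m / ((k - 1) * (φ (x, y)).1)) * (fderiv ℂ φ (x, y) (u, v)).1
        + μ * (φ (x, y)).1 ^ n * (fderiv ℂ φ (x, y) (u, v)).1
      = v + (μ * Complex.exp x / ((n : ℂ) + 1)) * u := by
  subst hφ
  have hc : ((n : ℂ) + 1) ≠ 0 := by
    have : ((n + 1 : ℤ) : ℂ) ≠ 0 := Int.cast_ne_zero.mpr (by omega)
    push_cast at this; exact this
  have hk' : k - 1 ≠ 0 := sub_ne_zero.mpr hk
  set c : ℂ := (n : ℂ) + 1 with hcdef
  clear_value c
  -- linear maps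
  set l₁ : ℂ × ℂ →L[ℂ] ℂ := (1 / c) • ContinuousLinearMap.fst ℂ ℂ ℂ with hl₁
  set l₂ : ℂ × ℂ →L[ℂ] ℂ :=
    ContinuousLinearMap.snd ℂ ℂ ℂ - (m / (c * (k - 1))) • ContinuousLinearMap.fst ℂ ℂ ℂ with hl₂
  have hl₁' : ∀ p : ℂ × ℂ, HasFDerivAt (fun p : ℂ × ℂ => p.1 / c) l₁ p := by
    intro p
    have := l₁.hasFDerivAt (x := p)
    convert this using 2 with q
    simp [hl₁, div_eq_inv_mul, mul_comm]
  have hl₂' : ∀ p : ℂ × ℂ, HasFDerivAt (fun p : ℂ × ℂ => p.2 - m * p.1 / (c * (k - 1))) l₂ p := by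
    intro p
    have := l₂.hasFDerivAt (x := p)
    convert this using 2 with q
    simp [hl₂, div_eq_inv_mul, smul_eq_mul]
    ring
  have H : ∀ p : ℂ × ℂ, HasFDerivAt
      (fun p : ℂ × ℂ => (Complex.exp (p.1 / c), Complex.exp (p.2 - m * p.1 / (c * (k - 1)))))
      ((Complex.exp (p.1 / c) • l₁).prod
        (Complex.exp (p.2 - m * p.1 / (c * (k - 1))) • l₂)) p := by
    intro p
    exact HasFDerivAt.prodMk ((hl₁' p).cexp) ((hl₂' p).cexp)
  refine ⟨fun p => (H p).differentiableAt, fun p => ⟨Complex.exp_ne_zero _, Complex.exp_ne_zero _⟩, ?_⟩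
  intro x y u v
  have hf := (H (x, y)).fderiv
  rw [hf]
  have hX : Complex.exp (x / c) ^ n = Complex.exp ((n : ℂ) * x / c) := by
    rw [mul_div_assoc]; exact (Complex.exp_int_mul _ _).symm
  simp only [ContinuousLinearMap.prod_apply, ContinuousLinearMap.smul_apply,
    ContinuousLinearMap.sub_apply, ContinuousLinearMap.coe_smul',
    ContinuousLinearMap.coe_fst', ContinuousLinearMap.coe_snd', Pi.smul_apply,
    smul_eq_mul, hl₁, hl₂, hX]
  have key : Complex.exp ((n : ℂ) * x / c) * Complex.exp (x / c) = Complex.exp x := by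
    rw [← Complex.exp_add]
    congr 1
    field_simp
    rw [hcdef]
  have h2 : ∀ a b : ℂ, Complex.exp a * b / Complex.exp a = b := fun a b => by
    rw [mul_comm, mul_div_assoc, div_self (Complex.exp_ne_zero a), mul_one]
  rw [h2, ← key]
  have hE : Complex.exp (x / c) ≠ 0 := Complex.exp_ne_zero _
  have hE2 : Complex.exp ((n : ℂ) * x / c) ≠ 0 := Complex.exp_ne_zero _
  set E := Complex.exp (x / c) with hEdef
  set F := Complex.exp ((n : ℂ) * x / c) with hFdef
  clear_value E F
  have t1 : m / ((k - 1) * E) * (E * (1 / c * u)) = m / (c * (k - 1)) * u := by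
    field_simp
  rw [t1, sub_add_cancel]
  field_simp
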